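/- Let F = F_q be a finite field and let A, B ∈ F^{n×n} be matrices such that the column space of B is not contained in the column space of A. Then there exist vectors v, w ∈ F^n such that for all (λ, μ) ∈ F² \ {(0,0)}: if rank(λA + μB) ≤ n−1 then λv + μw ∉ colsp(λA + μB). -/

import Mathlib

set_option linter.unusedSectionVars false

open Matrix Finset

namespace Stmt2Aux

variable {F : Type*} [Field F] [Fintype F] [DecidableEq F] {n : ℕ}

/-- The matrices of the pencil, indexed by `Option F` (`some t ↦ A + t•B`, `none ↦ B`). -/
def pm (A B : Matrix (Fin n) (Fin n) F) : Option F → Matrix (Fin n) (Fin n) F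
  | some t => A + t • B
  | none => B

/-- The vector pencil, as linear maps on pairs. -/
def pv : Option F → ((Fin n → F) × (Fin n → F)) →ₗ[F] (Fin n → F)
  | some t => LinearMap.fst F (Fin n → F) (Fin n → F) + t • LinearMap.snd F (Fin n → F) (Fin n → F)
  | none => LinearMap.snd F (Fin n → F) (Fin n → F)

@[simp] lemma pv_some (t : F) (x : (Fin n → F) × (Fin n → F)) :
    pv (some t) x = x.1 + t • x.2 := rfl

@[simp] lemma pv_none (x : (Fin n → F) × (Fin n → F)) :
    pv (none : Option F) x = x.2 := rfl

lemma pv_pair_surj {p p' : Option F} (h : p ≠ p') (a b : Fin n → F) :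
    ∃ x : (Fin n → F) × (Fin n → F), pv p x = a ∧ pv p' x = b := by
  match p, p' with
  | some t, some s =>
    have hts : t - s ≠ 0 := sub_ne_zero.mpr (by simpa using h)
    refine ⟨⟨a - t • ((t - s)⁻¹ • (a - b)), (t - s)⁻¹ • (a - b)⟩, ?_, ?_⟩ <;>
      simp only [pv_some]
    · abel
    · match_scalars <;> field_simp <;> ring
  | some t, none => exact ⟨⟨a - t • b, b⟩, by simp, rfl⟩
  | none, some s => exact ⟨⟨b - s • a, a⟩, rfl, by simp⟩
  | none, none => exact absurd rfl h

lemma pv_pair_bij {p p' : Option F} (h : p ≠ p') :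
    Function.Bijective (fun x : (Fin n → F) × (Fin n → F) => (pv p x, pv p' x)) := by
  rw [Fintype.bijective_iff_surjective_and_card]
  refine ⟨fun y => ?_, rfl⟩
  obtain ⟨x, h1, h2⟩ := pv_pair_surj h y.1 y.2
  exact ⟨x, by simp [h1, h2]⟩

lemma pv_tri {p₁ p₂ p₃ : Option F} (h12 : p₁ ≠ p₂) (h13 : p₁ ≠ p₃) (h23 : p₂ ≠ p₃) :
    ∃ α β : F, α ≠ 0 ∧ β ≠ 0 ∧
      ∀ x : (Fin n → F) × (Fin n → F), pv p₁ x = α • pv p₂ x + β • pv p₃ x := by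
  match p₁, p₂, p₃ with
  | some t₁, some t₂, some t₃ =>
    have h12' : t₁ ≠ t₂ := by simpa using h12
    have h13' : t₁ ≠ t₃ := by simpa using h13
    have h23' : t₂ ≠ t₃ := by simpa using h23
    refine ⟨(t₁ - t₃) / (t₂ - t₃), (t₂ - t₁) / (t₂ - t₃), ?_, ?_, ?_⟩
    · exact div_ne_zero (sub_ne_zero.mpr h13') (sub_ne_zero.mpr h23')
    · exact div_ne_zero (sub_ne_zero.mpr (Ne.symm h12')) (sub_ne_zero.mpr h23')
    · intro x
      simp only [pv_some]
      have h23'' : t₂ - t₃ ≠ 0 := sub_ne_zero.mpr h23'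
      match_scalars <;> field_simp <;> ring
  | none, some t₂, some t₃ =>
    have h23' : t₂ - t₃ ≠ 0 := sub_ne_zero.mpr (by simpa using h23)
    refine ⟨(t₂ - t₃)⁻¹, -(t₂ - t₃)⁻¹, inv_ne_zero h23', neg_ne_zero.mpr (inv_ne_zero h23'), ?_⟩
    intro x
    simp only [pv_some, pv_none]
    match_scalars <;> field_simp <;> ring
  | some t₁, none, some t₃ =>
    have h13' : t₁ - t₃ ≠ 0 := sub_ne_zero.mpr (by simpa using h13)
    refine ⟨t₁ - t₃, 1, h13', one_ne_zero, ?_⟩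
    intro x
    simp only [pv_some, pv_none]
    match_scalars <;> ring
  | some t₁, some t₂, none =>
    have h12' : t₁ - t₂ ≠ 0 := sub_ne_zero.mpr (by simpa using h12)
    refine ⟨1, t₁ - t₂, one_ne_zero, h12', ?_⟩
    intro x
    simp only [pv_some, pv_none]
    match_scalars <;> ring
  | none, none, _ => exact absurd rfl h12
  | none, _, none => exact absurd rfl h13
  | _, none, none => exact absurd rfl h23


lemma range_smul_mulVecLin {c : F} (hc : c ≠ 0) (M : Matrix (Fin n) (Fin n) F) :
    LinearMap.range (c • M).mulVecLin = LinearMap.range M.mulVecLin := by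
  ext x
  simp only [LinearMap.mem_range, Matrix.mulVecLin_apply]
  constructor
  · rintro ⟨y, rfl⟩
    exact ⟨c • y, by rw [Matrix.mulVec_smul, Matrix.smul_mulVec]⟩
  · rintro ⟨y, rfl⟩
    refine ⟨c⁻¹ • y, ?_⟩
    rw [Matrix.smul_mulVec, Matrix.mulVec_smul, smul_smul, mul_inv_cancel₀ hc, one_smul]

lemma W_ne_top_of_rank (hn : 0 < n) {M : Matrix (Fin n) (Fin n) F} (hr : M.rank ≤ n - 1) :
    LinearMap.range M.mulVecLin ≠ ⊤ := by
  intro htop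
  have hM : M.rank = n := by
    unfold Matrix.rank
    rw [htop, finrank_top]
    simp [Module.finrank_pi]
  omega

/-- Any two distinct members of the pencil span (at least) `colsp A + colsp B`. -/
lemma sup_W (A B : Matrix (Fin n) (Fin n) F) {p p' : Option F} (h : p ≠ p') :
    LinearMap.range A.mulVecLin ⊔ LinearMap.range B.mulVecLin ≤
      LinearMap.range (pm A B p).mulVecLin ⊔ LinearMap.range (pm A B p').mulVecLin := by
  have memL : ∀ (M : Matrix (Fin n) (Fin n) F) (y : Fin n → F),
      M.mulVec y ∈ LinearMap.range M.mulVecLin := fun M y => ⟨y, by rw [Matrix.mulVecLin_apply]⟩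
  apply sup_le
  · rintro x ⟨y, rfl⟩
    rw [Matrix.mulVecLin_apply]
    match p, p' with
    | some t, some s =>
      have hts : t - s ≠ 0 := sub_ne_zero.mpr (by simpa using h)
      have e : A.mulVec y = (t - s)⁻¹ • (t • ((pm A B (some s)).mulVec y)
          - s • ((pm A B (some t)).mulVec y)) := by
        show A.mulVec y = (t - s)⁻¹ • (t • ((A + s • B).mulVec y) - s • ((A + t • B).mulVec y))
        rw [Matrix.add_mulVec, Matrix.add_mulVec, Matrix.smul_mulVec,
          Matrix.smul_mulVec]
        match_scalars <;> field_simp <;> ring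
      rw [e]
      exact Submodule.smul_mem _ _ (Submodule.sub_mem _
        (Submodule.mem_sup_right (Submodule.smul_mem _ _ (memL _ y)))
        (Submodule.mem_sup_left (Submodule.smul_mem _ _ (memL _ y))))
    | some t, none =>
      have e : A.mulVec y = (pm A B (some t)).mulVec y - t • ((pm A B none).mulVec y) := by
        show A.mulVec y = (A + t • B).mulVec y - t • (B.mulVec y)
        rw [Matrix.add_mulVec, Matrix.smul_mulVec]
        abel
      rw [e]
      exact Submodule.sub_mem _ (Submodule.mem_sup_left (memL _ y))
        (Submodule.mem_sup_right (Submodule.smul_mem _ _ (memL _ y)))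
    | none, some s =>
      have e : A.mulVec y = (pm A B (some s)).mulVec y - s • ((pm A B none).mulVec y) := by
        show A.mulVec y = (A + s • B).mulVec y - s • (B.mulVec y)
        rw [Matrix.add_mulVec, Matrix.smul_mulVec]
        abel
      rw [e]
      exact Submodule.sub_mem _ (Submodule.mem_sup_right (memL _ y))
        (Submodule.mem_sup_left (Submodule.smul_mem _ _ (memL _ y)))
    | none, none => exact absurd rfl h
  · rintro x ⟨y, rfl⟩
    rw [Matrix.mulVecLin_apply]
    match p, p' with
    | some t, some s =>
      have hts : t - s ≠ 0 := sub_ne_zero.mpr (by simpa using h)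
      have e : B.mulVec y = (t - s)⁻¹ • (((pm A B (some t)).mulVec y)
          - ((pm A B (some s)).mulVec y)) := by
        show B.mulVec y = (t - s)⁻¹ • ((A + t • B).mulVec y - (A + s • B).mulVec y)
        rw [Matrix.add_mulVec, Matrix.add_mulVec, Matrix.smul_mulVec,
          Matrix.smul_mulVec]
        match_scalars <;> field_simp <;> ring
      rw [e]
      exact Submodule.smul_mem _ _ (Submodule.sub_mem _
        (Submodule.mem_sup_left (memL _ y)) (Submodule.mem_sup_right (memL _ y)))
    | some t, none => exact Submodule.mem_sup_right (memL _ y)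
    | none, some s => exact Submodule.mem_sup_left (memL _ y)
    | none, none => exact absurd rfl h

lemma exists_notMem_two {M : Type*} [AddCommGroup M] [Module F M]
    (P Q : Submodule F M) (hP : P ≠ ⊤) (hQ : Q ≠ ⊤) : ∃ x, x ∉ P ∧ x ∉ Q := by
  obtain ⟨a, -, ha⟩ := SetLike.exists_of_lt (show P < ⊤ from lt_top_iff_ne_top.mpr hP)
  obtain ⟨b, -, hb⟩ := SetLike.exists_of_lt (show Q < ⊤ from lt_top_iff_ne_top.mpr hQ)
  by_cases haQ : a ∈ Q
  · by_cases hbP : b ∈ P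
    · refine ⟨a + b, fun hab => ha ?_, fun hab => hb ?_⟩
      · have := P.sub_mem hab hbP
        simpa using this
      · have := Q.sub_mem hab haQ
        simpa using this
    · exact ⟨b, hbP, hb⟩
  · exact ⟨a, ha, haQ⟩


lemma card_filter_comp {α β : Type*} [Fintype α] [Fintype β]
    (g : α → β) (hg : Function.Bijective g) (P : β → Prop) [DecidablePred P] :
    ((Finset.univ : Finset α).filter (fun x => P (g x))).card
      = ((Finset.univ : Finset β).filter P).card := by
  apply Finset.card_bij (fun x _ => g x)
  · intro a ha
    simp only [Finset.mem_filter, Finset.mem_univ, true_and] at ha ⊢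
    exact ha
  · intro a _ b _ hab
    exact hg.1 hab
  · intro b hb
    simp only [Finset.mem_filter, Finset.mem_univ, true_and] at hb
    obtain ⟨a, rfl⟩ := hg.2 b
    exact ⟨a, by simp [hb], rfl⟩

lemma card_S_pair {p p' : Option F} (hpp' : p ≠ p')
    (P Q : (Fin n → F) → Prop) [DecidablePred P] [DecidablePred Q] :
    ((Finset.univ : Finset ((Fin n → F) × (Fin n → F))).filter
        (fun x => P (pv p x) ∧ Q (pv p' x))).card
      = (Finset.univ.filter P).card * (Finset.univ.filter Q).card := by
  have hg := pv_pair_bij (n := n) hpp'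
  have h1 := card_filter_comp _ hg (fun y : (Fin n → F) × (Fin n → F) => P y.1 ∧ Q y.2)
  rw [h1, ← Finset.univ_product_univ, Finset.filter_product, Finset.card_product]


lemma case2 (hn : 0 < n) (A B : Matrix (Fin n) (Fin n) F)
    (hsum : LinearMap.range A.mulVecLin ⊔ LinearMap.range B.mulVecLin = ⊤) :
    ∃ x : (Fin n → F) × (Fin n → F), ∀ p : Option F,
      LinearMap.range (pm A B p).mulVecLin ≠ ⊤ →
        pv p x ∉ LinearMap.range (pm A B p).mulVecLin := by
  classical
  set q := Fintype.card F with hq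
  set cV := Fintype.card (Fin n → F) with hcVdef
  have hcV : cV = q ^ n := by
    rw [hcVdef, hq]
    simp
  set W : Option F → Submodule F (Fin n → F) :=
    fun p => LinearMap.range (pm A B p).mulVecLin with hWdef
  set D : Finset (Option F) := Finset.univ.filter (fun p => W p ≠ ⊤) with hDdef
  suffices hgoal : ∃ x, ∀ p ∈ D, pv p x ∉ W p by
    obtain ⟨x, hx⟩ := hgoal
    exact ⟨x, fun p hp => hx p (by simp only [hDdef, Finset.mem_filter]; exact ⟨Finset.mem_univ _, hp⟩)⟩
  have hWD : ∀ p ∈ D, W p ≠ ⊤ := by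
    intro p hp
    simp only [hDdef, Finset.mem_filter] at hp
    exact hp.2
  have hsup2 : ∀ {p p' : Option F}, p ≠ p' → W p ⊔ W p' = ⊤ :=
    fun {p p'} hpp' => top_le_iff.mp (hsum ▸ sup_W A B hpp')
  by_cases hcard : 2 < D.card
  · -- counting case
    obtain ⟨p₁, hp₁D, p₂, hp₂D, p₃, hp₃D, h12, h13, h23⟩ := Finset.two_lt_card.mp hcard
    set S : Option F → Finset ((Fin n → F) × (Fin n → F)) :=
      fun p => Finset.univ.filter (fun x => pv p x ∈ W p) with hSdef
    set WC : Option F → ℕ :=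
      fun p => (Finset.univ.filter (fun a : Fin n → F => a ∈ W p)).card with hWCdef
    have hWCcV : ∀ p, WC p ≤ cV := fun p =>
      le_trans (Finset.card_filter_le _ _) (le_of_eq (Finset.card_univ))
    have hSC : ∀ {p p' : Option F}, p ≠ p' → (S p).card = WC p * cV := by
      intro p p' hpp'
      have h2 := card_S_pair (n := n) hpp' (fun a => a ∈ W p) (fun _ => True)
      simp only [and_true, Finset.filter_true, Finset.card_univ] at h2
      exact h2
    have hSIC : ∀ {p p' : Option F}, p ≠ p' → (S p ∩ S p').card = WC p * WC p' := by
      intro p p' hpp'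
      have h2 := card_S_pair (n := n) hpp' (fun a => a ∈ W p) (fun a => a ∈ W p')
      rw [Finset.filter_and] at h2
      exact h2
    have hWCle : ∀ p ∈ D, WC p ≤ q ^ (n - 1) := by
      intro p hp
      have hWp : W p ≠ ⊤ := hWD p hp
      haveI : Fintype (W p) := Fintype.ofFinite _
      have h1 : WC p = Fintype.card (W p) :=
        (Fintype.card_of_subtype _ (fun x => by simp)).symm
      have h2 : Fintype.card (W p) = q ^ (Module.finrank F (W p)) :=
        Module.card_eq_pow_finrank (K := F)
      have h3 : Module.finrank F (W p) < n := by
        have h4 := Submodule.finrank_lt (K := F) (V := Fin n → F)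
          hWp
        simpa using h4
      rw [h1, h2]
      exact Nat.pow_le_pow_right Fintype.card_pos (by omega)
    have hwit : ∃ x, x ∈ S p₂ ∧ x ∈ S p₃ ∧ x ∉ S p₁ := by
      obtain ⟨z, hz⟩ : ∃ z, z ∉ W p₁ := by
        by_contra hzz
        push_neg at hzz
        exact hWD p₁ hp₁D (eq_top_iff.mpr fun a _ => hzz a)
      have hztop : z ∈ W p₂ ⊔ W p₃ := by rw [hsup2 h23]; exact Submodule.mem_top
      obtain ⟨y₂, hy₂, y₃, hy₃, hzsum⟩ := Submodule.mem_sup.mp hztop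
      obtain ⟨α, β, hα, hβ, hlin⟩ := pv_tri h12 h13 h23
      obtain ⟨x, hx2, hx3⟩ := pv_pair_surj h23 (α⁻¹ • y₂) (β⁻¹ • y₃)
      refine ⟨x, ?_, ?_, ?_⟩
      · exact Finset.mem_filter.mpr ⟨Finset.mem_univ _,
          by rw [hx2]; exact Submodule.smul_mem _ _ hy₂⟩
      · exact Finset.mem_filter.mpr ⟨Finset.mem_univ _,
          by rw [hx3]; exact Submodule.smul_mem _ _ hy₃⟩
      · intro hxS
        have hmem : pv p₁ x ∈ W p₁ := (Finset.mem_filter.mp hxS).2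
        rw [hlin x, hx2, hx3, smul_smul, mul_inv_cancel₀ hα, one_smul, smul_smul,
          mul_inv_cancel₀ hβ, one_smul, hzsum] at hmem
        exact hz hmem
    set E := D.erase p₁ with hEdef
    set T : Option F → Finset ((Fin n → F) × (Fin n → F)) := fun p => S p \ S p₁ with hTdef
    have hp₂E : p₂ ∈ E := Finset.mem_erase.mpr ⟨Ne.symm h12, hp₂D⟩
    have hp₃E : p₃ ∈ E := Finset.mem_erase.mpr ⟨Ne.symm h13, hp₃D⟩
    have hTcard : ∀ p ∈ E, (T p).card = WC p * (cV - WC p₁) := by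
      intro p hpE
      have hpne : p ≠ p₁ := Finset.ne_of_mem_erase hpE
      have h1 : (S p ∩ S p₁).card + (S p \ S p₁).card = (S p).card :=
        Finset.card_inter_add_card_sdiff _ _
      rw [hSC hpne, hSIC hpne] at h1
      have h2 : (T p).card = WC p * cV - WC p * WC p₁ := by
        simp only [hTdef]
        omega
      rw [h2, mul_tsub]
    have hEcardle : E.card ≤ q := by
      have h1 : D.card ≤ q + 1 := by
        have := Finset.card_le_univ D
        simpa [hq] using this
      have h2 : E.card = D.card - 1 := Finset.card_erase_of_mem hp₁D
      omega
    have hsub1 : D.biUnion S ⊆ S p₁ ∪ E.biUnion T := by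
      intro x hx
      obtain ⟨p, hpD, hxp⟩ := Finset.mem_biUnion.mp hx
      by_cases hx1 : x ∈ S p₁
      · exact Finset.mem_union_left _ hx1
      · refine Finset.mem_union_right _ (Finset.mem_biUnion.mpr ⟨p, ?_, ?_⟩)
        · refine Finset.mem_erase.mpr ⟨?_, hpD⟩
          rintro rfl
          exact hx1 hxp
        · exact Finset.mem_sdiff.mpr ⟨hxp, hx1⟩
    have hsub2 : E.biUnion T ⊆ (T p₂ ∪ T p₃) ∪ (E \ {p₂, p₃}).biUnion T := by
      intro x hx
      obtain ⟨p, hpE, hxp⟩ := Finset.mem_biUnion.mp hx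
      by_cases hp2 : p = p₂
      · exact Finset.mem_union_left _ (Finset.mem_union_left _ (hp2 ▸ hxp))
      by_cases hp3 : p = p₃
      · exact Finset.mem_union_left _ (Finset.mem_union_right _ (hp3 ▸ hxp))
      refine Finset.mem_union_right _ (Finset.mem_biUnion.mpr ⟨p, ?_, hxp⟩)
      exact Finset.mem_sdiff.mpr ⟨hpE, by simp [hp2, hp3]⟩
    have hTT : 1 ≤ (T p₂ ∩ T p₃).card := by
      obtain ⟨x, hx2, hx3, hx1⟩ := hwit
      refine Finset.card_pos.mpr ⟨x, ?_⟩
      rw [Finset.mem_inter]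
      exact ⟨Finset.mem_sdiff.mpr ⟨hx2, hx1⟩, Finset.mem_sdiff.mpr ⟨hx3, hx1⟩⟩
    have hcui := Finset.card_union_add_card_inter (T p₂) (T p₃)
    have hsplit : ∑ p ∈ E \ {p₂, p₃}, (T p).card + ((T p₂).card + (T p₃).card)
        = ∑ p ∈ E, (T p).card := by
      have hsubpair : {p₂, p₃} ⊆ E := by
        intro p hp
        rcases Finset.mem_insert.mp hp with rfl | hp
        · exact hp₂E
        · rw [Finset.mem_singleton.mp hp]; exact hp₃E
      have h5 := Finset.sum_sdiff (f := fun p => (T p).card) hsubpair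
      rw [Finset.sum_pair h23] at h5
      exact h5
    have hsumbound : ∑ p ∈ E, (T p).card ≤ q * (q ^ (n - 1) * (cV - WC p₁)) := by
      calc ∑ p ∈ E, (T p).card ≤ E.card * (q ^ (n - 1) * (cV - WC p₁)) := by
            have := Finset.sum_le_card_nsmul E (fun p => (T p).card)
              (q ^ (n - 1) * (cV - WC p₁)) (fun p hpE => by
                show (T p).card ≤ q ^ (n - 1) * (cV - WC p₁)
                rw [hTcard p hpE]
                exact Nat.mul_le_mul_right _ (hWCle p (Finset.mem_of_mem_erase hpE)))
            simpa using this
        _ ≤ q * (q ^ (n - 1) * (cV - WC p₁)) := Nat.mul_le_mul_right _ hEcardle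
    have hS1 : (S p₁).card = WC p₁ * cV := hSC h12
    have hq1 : q * (q ^ (n - 1) * (cV - WC p₁)) = cV * (cV - WC p₁) := by
      rw [← mul_assoc]
      congr 1
      rw [hcV, ← pow_succ']
      congr 1
      omega
    have hc2 : cV * (cV - WC p₁) = cV * cV - cV * WC p₁ := mul_tsub _ _ _
    have hle2 : cV * WC p₁ ≤ cV * cV := Nat.mul_le_mul_left _ (hWCcV p₁)
    have hWCcomm : WC p₁ * cV = cV * WC p₁ := Nat.mul_comm _ _
    have hb1 : (D.biUnion S).card ≤ (S p₁).card + (E.biUnion T).card :=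
      le_trans (Finset.card_le_card hsub1) (Finset.card_union_le _ _)
    have hb2 : (E.biUnion T).card ≤ (T p₂ ∪ T p₃).card + ((E \ {p₂, p₃}).biUnion T).card :=
      le_trans (Finset.card_le_card hsub2) (Finset.card_union_le _ _)
    have hb3 : ((E \ {p₂, p₃}).biUnion T).card ≤ ∑ p ∈ E \ {p₂, p₃}, (T p).card :=
      Finset.card_biUnion_le
    have hfinal : (D.biUnion S).card + 1 ≤ cV * cV := by omega
    by_contra hc
    push_neg at hc
    have hcover : (Finset.univ : Finset ((Fin n → F) × (Fin n → F))) ⊆ D.biUnion S := by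
      intro x _
      obtain ⟨p, hpD, hpx⟩ := hc x
      exact Finset.mem_biUnion.mpr ⟨p, hpD, Finset.mem_filter.mpr ⟨Finset.mem_univ _, hpx⟩⟩
    have hcard2 : cV * cV ≤ (D.biUnion S).card := by
      have := Finset.card_le_card hcover
      rwa [Finset.card_univ, Fintype.card_prod] at this
    omega
  · -- at most two degenerate points
    rcases D.eq_empty_or_nonempty with hDe | ⟨p₁, hp₁⟩
    · exact ⟨0, by simp [hDe]⟩
    have hbadne : ∀ p ∈ D, Submodule.comap (pv p) (W p) ≠ ⊤ := by
      intro p hp htop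
      apply hWD p hp
      rw [eq_top_iff]
      intro a _
      have hsec : ∃ x, pv p x = a := by
        match p with
        | some t => exact ⟨(a, 0), by simp⟩
        | none => exact ⟨(0, a), rfl⟩
      obtain ⟨x, rfl⟩ := hsec
      have hx : x ∈ (⊤ : Submodule F ((Fin n → F) × (Fin n → F))) := Submodule.mem_top
      rw [← htop] at hx
      exact hx
    by_cases hone : ∀ p ∈ D, p = p₁
    · obtain ⟨x, -, hx⟩ := SetLike.exists_of_lt
        (show Submodule.comap (pv p₁) (W p₁) < ⊤ from lt_top_iff_ne_top.mpr (hbadne p₁ hp₁))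
      refine ⟨x, fun p hp => ?_⟩
      rw [hone p hp]
      exact fun hmem => hx (Submodule.mem_comap.mpr hmem)
    · push_neg at hone
      obtain ⟨p₂, hp₂, hp₂ne⟩ := hone
      have hall : ∀ p ∈ D, p = p₁ ∨ p = p₂ := by
        intro p hp
        by_contra hcon
        push_neg at hcon
        exact hcard (Finset.two_lt_card.mpr
          ⟨p, hp, p₁, hp₁, p₂, hp₂, hcon.1, hcon.2, Ne.symm hp₂ne⟩)
      obtain ⟨x, hx1, hx2⟩ := exists_notMem_two (Submodule.comap (pv p₁) (W p₁))
        (Submodule.comap (pv p₂) (W p₂)) (hbadne p₁ hp₁) (hbadne p₂ hp₂)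
      refine ⟨x, fun p hp => ?_⟩
      rcases hall p hp with rfl | rfl
      · exact fun hmem => hx1 (Submodule.mem_comap.mpr hmem)
      · exact fun hmem => hx2 (Submodule.mem_comap.mpr hmem)


lemma case1 (A B : Matrix (Fin n) (Fin n) F)
    (h : ¬ LinearMap.range B.mulVecLin ≤ LinearMap.range A.mulVecLin)
    (hsum : LinearMap.range A.mulVecLin ⊔ LinearMap.range B.mulVecLin ≠ ⊤) :
    ∃ v w : Fin n → F, ∀ lam mu : F, (lam, mu) ≠ (0, 0) →
      lam • v + mu • w ∉ LinearMap.range (lam • A + mu • B).mulVecLin := by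
  obtain ⟨f, hf0, hfmap⟩ := Submodule.exists_dual_map_eq_bot_of_lt_top
    (lt_top_iff_ne_top.mpr hsum) inferInstance
  set Wsum := LinearMap.range A.mulVecLin ⊔ LinearMap.range B.mulVecLin with hWs
  have hker : ∀ u ∈ Wsum, f u = 0 := by
    intro u hu
    have h1 : f u ∈ Wsum.map f := Submodule.mem_map_of_mem hu
    rw [hfmap] at h1
    simpa using h1
  have hfA : ∀ y, f (A.mulVec y) = 0 := fun y =>
    hker _ (Submodule.mem_sup_left ⟨y, by rw [Matrix.mulVecLin_apply]⟩)
  have hfB : ∀ y, f (B.mulVec y) = 0 := fun y =>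
    hker _ (Submodule.mem_sup_right ⟨y, by rw [Matrix.mulVecLin_apply]⟩)
  have hle : LinearMap.range A.mulVecLin ≤ LinearMap.ker f := by
    rintro u ⟨y, rfl⟩
    rw [LinearMap.mem_ker, Matrix.mulVecLin_apply]
    exact hfA y
  have hne : LinearMap.range A.mulVecLin ≠ LinearMap.ker f := by
    intro heq
    apply h
    rintro u ⟨y, rfl⟩
    rw [heq]
    rw [LinearMap.mem_ker, Matrix.mulVecLin_apply]
    exact hfB y
  obtain ⟨v, hvk, hvnA⟩ := SetLike.exists_of_lt (lt_of_le_of_ne hle hne)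
  have hfv : f v = 0 := hvk
  obtain ⟨u, hu⟩ : ∃ u, f u ≠ 0 := by
    by_contra hc
    push_neg at hc
    exact hf0 (LinearMap.ext fun u => by simp [hc u])
  refine ⟨v, (f u)⁻¹ • u, fun lam mu hne0 => ?_⟩
  have hfw : f ((f u)⁻¹ • u) = 1 := by
    rw [_root_.map_smul, smul_eq_mul, inv_mul_cancel₀ hu]
  rintro ⟨y, hy⟩
  rw [Matrix.mulVecLin_apply] at hy
  have happ := congrArg f hy
  rw [Matrix.add_mulVec, Matrix.smul_mulVec, Matrix.smul_mulVec,
    map_add, _root_.map_smul, _root_.map_smul, map_add, _root_.map_smul, _root_.map_smul, hfA y, hfB y, hfv, hfw] at happ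
  simp only [smul_eq_mul, mul_zero, mul_one, add_zero, zero_add] at happ
  -- happ : 0 = mu
  have hmu : mu = 0 := happ.symm
  have hlam : lam ≠ 0 := by
    rintro rfl
    exact hne0 (by rw [hmu])
  rw [hmu] at hy
  rw [Matrix.add_mulVec, Matrix.smul_mulVec, Matrix.smul_mulVec, zero_smul,
    zero_smul, add_zero, add_zero] at hy
  have hAyv : A.mulVec y = v := smul_right_injective _ hlam hy
  exact hvnA ⟨y, by rw [Matrix.mulVecLin_apply, hAyv]⟩

end Stmt2Aux

set_option maxHeartbeats 1000000 in
/-- If `colsp B ⊄ colsp A`, there exist `v, w` such that for every `(λ,μ) ≠ (0,0)`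
with `rank(λA + μB) ≤ n−1`, the vector `λv + μw` is not in the column space of
`λA + μB`. -/
theorem stmt2 {F : Type*} [Field F] [Fintype F] [DecidableEq F] {n : ℕ}
    (A B : Matrix (Fin n) (Fin n) F)
    (h : ¬ LinearMap.range B.mulVecLin ≤ LinearMap.range A.mulVecLin) :
    ∃ v w : Fin n → F, ∀ lam mu : F, (lam, mu) ≠ (0, 0) →
      (lam • A + mu • B).rank ≤ n - 1 →
      lam • v + mu • w ∉ LinearMap.range (lam • A + mu • B).mulVecLin := by
  open Stmt2Aux in
  have hn : 0 < n := by
    rcases Nat.eq_zero_or_pos n with h0 | h1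
    · exfalso
      apply h
      subst h0
      rintro x -
      have hx0 : x = 0 := funext fun i => i.elim0
      rw [hx0]
      exact Submodule.zero_mem _
    · exact h1
  by_cases hsum : LinearMap.range A.mulVecLin ⊔ LinearMap.range B.mulVecLin = ⊤
  · obtain ⟨x, hx⟩ := Stmt2Aux.case2 hn A B hsum
    refine ⟨x.1, x.2, fun lam mu hne hrank => ?_⟩
    by_cases hlam : lam = 0
    · subst hlam
      have hmu : mu ≠ 0 := by
        intro h0
        exact hne (by rw [h0])
      have hM : (0 : F) • A + mu • B = mu • B := by rw [zero_smul, zero_add]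
      rw [hM] at hrank ⊢
      have hr : LinearMap.range (Stmt2Aux.pm A B none).mulVecLin ≠ ⊤ := by
        apply Stmt2Aux.W_ne_top_of_rank hn
        have heq : (mu • B).rank = B.rank := by
          unfold Matrix.rank
          rw [Stmt2Aux.range_smul_mulVecLin hmu]
        rw [heq] at hrank
        exact hrank
      have hnot := hx none hr
      rw [zero_smul, zero_add, Stmt2Aux.range_smul_mulVecLin hmu]
      intro hmem
      exact hnot ((Submodule.smul_mem_iff _ hmu).mp hmem)
    · set t := lam⁻¹ * mu with ht
      have hM : lam • A + mu • B = lam • (A + t • B) := by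
        rw [smul_add, smul_smul, ht, mul_inv_cancel_left₀ hlam]
      have hvw : lam • x.1 + mu • x.2 = lam • (x.1 + t • x.2) := by
        rw [smul_add, smul_smul, ht, mul_inv_cancel_left₀ hlam]
      rw [hM] at hrank ⊢
      have hr : LinearMap.range (Stmt2Aux.pm A B (some t)).mulVecLin ≠ ⊤ := by
        apply Stmt2Aux.W_ne_top_of_rank hn
        have heq : (lam • (A + t • B)).rank = (A + t • B).rank := by
          unfold Matrix.rank
          rw [Stmt2Aux.range_smul_mulVecLin hlam]
        rw [heq] at hrank
        exact hrank
      have hnot := hx (some t) hr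
      rw [hvw, Stmt2Aux.range_smul_mulVecLin hlam]
      intro hmem
      exact hnot ((Submodule.smul_mem_iff _ hlam).mp hmem)
  · obtain ⟨v, w, hvw⟩ := Stmt2Aux.case1 A B h hsum
    exact ⟨v, w, fun lam mu hne _ => hvw lam mu hne⟩
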